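/- Let p be a prime, m a positive integer, k an integer with 1 ≤ k ≤ m−1, q = p^k, and let P = T(q,α,a,b) be a Taniguchi pre-semifield on F × F. Let p' be a p-primitive divisor of p^m − 1. Suppose the centralizer C of Z_R^{(q)} in Aut(P) contains Z^{(q)} as a subgroup of index I, where p' does not divide I. Then Z_R^{(q)} is a Sylow p'-subgroup of Aut(P). -/

import Mathlib

open scoped Classical
noncomputable section

abbrev GF (p m : ℕ) [Fact p.Prime] := GaloisField p m

/-- The Taniguchi multiplication `T(q,α,a,b)` on `F × F` where `F = F_{p^m}`. -/
def taniMul (p m : ℕ) [Fact p.Prime] (q : ℕ) (α a b : GF p m) :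
    GF p m × GF p m → GF p m × GF p m → GF p m × GF p m :=
  fun w z =>
    (w.1 ^ q * z.1 + α ^ q ^ 2 * w.1 * z.1 ^ q
       - a * (w.1 * z.2 ^ q - α ^ q * z.1 * w.2 ^ q)
       - b * (w.2 ^ q * z.2 + α * w.2 * z.2 ^ q),
     w.1 * z.2 ^ q ^ 2 + w.2 ^ q ^ 2 * z.1)

/-- Two multiplications on `F × F` are isotopic if there are `F_p`-linear bijections
`N, L, M` with `N (w ∘₁ z) = L w ∘₂ M z` for all `w, z`. -/
def Isotopic (p m : ℕ) [Fact p.Prime]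
    (mul1 mul2 : GF p m × GF p m → GF p m × GF p m → GF p m × GF p m) : Prop :=
  ∃ N L M : (GF p m × GF p m) ≃ₗ[ZMod p] GF p m × GF p m,
    ∀ w z, N (mul1 w z) = mul2 (L w) (M z)

/-- `p'` is a `p`-primitive divisor of `p^m - 1`. -/
def IsPrimitiveDivisor (p m p' : ℕ) : Prop :=
  p'.Prime ∧ p' ∣ p ^ m - 1 ∧ ∀ j : ℕ, 1 ≤ j → j < m → ¬ p' ∣ p ^ j - 1

/-- The Taniguchi pre-semifield conditions on the parameters. -/
def IsTaniguchiParam (p m : ℕ) [Fact p.Prime] (q : ℕ) (α a b : GF p m) : Prop :=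
  (¬ ∃ c : GF p m, -α = c ^ (q - 1)) ∧ ∀ x : GF p m, x ^ (q + 1) + a * x + b ≠ 0

/-- The group `GL_{F_p}(F×F)³` in which autotopism groups live. -/
abbrev G3 (p m : ℕ) [Fact p.Prime] :=
  ((GF p m × GF p m) ≃ₗ[ZMod p] GF p m × GF p m) ×
    ((GF p m × GF p m) ≃ₗ[ZMod p] GF p m × GF p m) ×
      ((GF p m × GF p m) ≃ₗ[ZMod p] GF p m × GF p m)

/-- The autotopism group of a multiplication on `F × F`, as a subgroup of `G3`. -/
def autGroup (p m : ℕ) [Fact p.Prime]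
    (mul : GF p m × GF p m → GF p m × GF p m → GF p m × GF p m) : Subgroup (G3 p m) where
  carrier := {t | ∀ w z, t.1 (mul w z) = mul (t.2.1 w) (t.2.2 z)}
  one_mem' := by intro w z; rfl
  mul_mem' := by
    intro s t hs ht w z
    have h1 : (s * t).1 (mul w z) = s.1 (t.1 (mul w z)) := rfl
    have h2 : ∀ w' z', mul ((s * t).2.1 w') ((s * t).2.2 z')
        = mul (s.2.1 (t.2.1 w')) (s.2.2 (t.2.2 z')) := fun _ _ => rfl
    rw [h1, h2, ht, hs]
  inv_mem' := by
    intro t ht w z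
    have := ht (t.2.1⁻¹ w) (t.2.2⁻¹ z)
    have h1 : t.2.1 (t.2.1⁻¹ w) = w := t.2.1.apply_symm_apply w
    have h2 : t.2.2 (t.2.2⁻¹ z) = z := t.2.2.apply_symm_apply z
    rw [h1, h2] at this
    have h3 : t⁻¹.1 (mul w z) = t.1⁻¹ (mul w z) := rfl
    rw [h3, ← this]
    exact t.1.symm_apply_apply _

/-- The subgroup `Z^{(q)} = {γ_r : r ∈ F^*}` of `G3`. -/
def Zgroup (p m : ℕ) [Fact p.Prime] (q : ℕ) : Subgroup (G3 p m) where
  carrier := {t | ∃ r : GF p m, r ≠ 0 ∧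
    (∀ w : GF p m × GF p m, t.1 w = (r ^ (q + 1) * w.1, r ^ (q ^ 2 + 1) * w.2)) ∧
    (∀ w : GF p m × GF p m, t.2.1 w = (r * w.1, r * w.2)) ∧
    (∀ w : GF p m × GF p m, t.2.2 w = (r * w.1, r * w.2))}
  one_mem' := ⟨1, one_ne_zero, fun w => by simp, fun w => by simp, fun w => by simp⟩
  mul_mem' := by
    rintro s t ⟨r₁, hr₁, hN₁, hL₁, hM₁⟩ ⟨r₂, hr₂, hN₂, hL₂, hM₂⟩
    refine ⟨r₁ * r₂, mul_ne_zero hr₁ hr₂, fun w => ?_, fun w => ?_, fun w => ?_⟩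
    · show s.1 (t.1 w) = _
      rw [hN₂, hN₁]
      simp [Prod.ext_iff, mul_pow]
      constructor <;> ring
    · show s.2.1 (t.2.1 w) = _
      rw [hL₂, hL₁]
      simp [Prod.ext_iff]
      constructor <;> ring
    · show s.2.2 (t.2.2 w) = _
      rw [hM₂, hM₁]
      simp [Prod.ext_iff]
      constructor <;> ring
  inv_mem' := by
    rintro t ⟨r, hr, hN, hL, hM⟩
    refine ⟨r⁻¹, inv_ne_zero hr, fun w => ?_, fun w => ?_, fun w => ?_⟩
    · have key : t.1 (r⁻¹ ^ (q + 1) * w.1, r⁻¹ ^ (q ^ 2 + 1) * w.2) = w := by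
        rw [hN]
        simp [Prod.ext_iff, ← mul_assoc, ← mul_pow, mul_inv_cancel₀ hr]
        constructor <;> rw [mul_inv_cancel₀ (pow_ne_zero _ hr), one_mul]
      show t.1⁻¹ w = _
      have : (t.1⁻¹ : _) w = t.1.symm w := rfl
      rw [this, LinearEquiv.symm_apply_eq, key]
    · have key : t.2.1 (r⁻¹ * w.1, r⁻¹ * w.2) = w := by
        rw [hL]
        simp [Prod.ext_iff, ← mul_assoc, mul_inv_cancel₀ hr]
      show t.2.1⁻¹ w = _
      have : (t.2.1⁻¹ : _) w = t.2.1.symm w := rfl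
      rw [this, LinearEquiv.symm_apply_eq, key]
    · have key : t.2.2 (r⁻¹ * w.1, r⁻¹ * w.2) = w := by
        rw [hM]
        simp [Prod.ext_iff, ← mul_assoc, mul_inv_cancel₀ hr]
      show t.2.2⁻¹ w = _
      have : (t.2.2⁻¹ : _) w = t.2.2.symm w := rfl
      rw [this, LinearEquiv.symm_apply_eq, key]

/-- The subgroup `Z_R^{(q)} = {γ_r : r ∈ R}` of `G3`, where `R` is the Sylow
`p'`-subgroup of `F^*` (the elements whose order is a power of the prime `p'`). -/
def ZRgroup (p m : ℕ) [Fact p.Prime] (q p' : ℕ) (hp' : p'.Prime) : Subgroup (G3 p m) where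
  carrier := {t | ∃ r : GF p m, r ≠ 0 ∧ (∃ j : ℕ, orderOf r = p' ^ j) ∧
    (∀ w : GF p m × GF p m, t.1 w = (r ^ (q + 1) * w.1, r ^ (q ^ 2 + 1) * w.2)) ∧
    (∀ w : GF p m × GF p m, t.2.1 w = (r * w.1, r * w.2)) ∧
    (∀ w : GF p m × GF p m, t.2.2 w = (r * w.1, r * w.2))}
  one_mem' := ⟨1, one_ne_zero, ⟨0, by simp⟩, fun w => by simp, fun w => by simp,
    fun w => by simp⟩
  mul_mem' := by
    rintro s t ⟨r₁, hr₁, ⟨j₁, hj₁⟩, hN₁, hL₁, hM₁⟩ ⟨r₂, hr₂, ⟨j₂, hj₂⟩, hN₂, hL₂, hM₂⟩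
    have hcomm : Commute r₁ r₂ := mul_comm r₁ r₂
    have hdvd : orderOf (r₁ * r₂) ∣ p' ^ max j₁ j₂ := by
      refine hcomm.orderOf_mul_dvd_lcm.trans ?_
      rw [hj₁, hj₂]
      exact Nat.lcm_dvd (pow_dvd_pow _ (le_max_left _ _)) (pow_dvd_pow _ (le_max_right _ _))
    obtain ⟨j, _, hjeq⟩ := (Nat.dvd_prime_pow hp').1 hdvd
    refine ⟨r₁ * r₂, mul_ne_zero hr₁ hr₂, ⟨j, hjeq⟩, fun w => ?_, fun w => ?_, fun w => ?_⟩
    · show s.1 (t.1 w) = _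
      rw [hN₂, hN₁]
      simp [Prod.ext_iff, mul_pow]
      constructor <;> ring
    · show s.2.1 (t.2.1 w) = _
      rw [hL₂, hL₁]
      simp [Prod.ext_iff]
      constructor <;> ring
    · show s.2.2 (t.2.2 w) = _
      rw [hM₂, hM₁]
      simp [Prod.ext_iff]
      constructor <;> ring
  inv_mem' := by
    rintro t ⟨r, hr, ⟨j, hj⟩, hN, hL, hM⟩
    have hord : orderOf r⁻¹ = orderOf r := by
      have h1 : ((Units.mk0 r hr)⁻¹ : GF p m) = r⁻¹ := rfl
      rw [← h1, ← Units.val_inv_eq_inv_val, orderOf_units, orderOf_inv, ← orderOf_units,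
        Units.val_mk0]
    refine ⟨r⁻¹, inv_ne_zero hr, ⟨j, by rw [hord, hj]⟩, fun w => ?_, fun w => ?_,
      fun w => ?_⟩
    · have key : t.1 (r⁻¹ ^ (q + 1) * w.1, r⁻¹ ^ (q ^ 2 + 1) * w.2) = w := by
        rw [hN]
        simp [Prod.ext_iff, ← mul_assoc, ← mul_pow, mul_inv_cancel₀ hr]
        constructor <;> rw [mul_inv_cancel₀ (pow_ne_zero _ hr), one_mul]
      show t.1⁻¹ w = _
      have : (t.1⁻¹ : _) w = t.1.symm w := rfl
      rw [this, LinearEquiv.symm_apply_eq, key]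
    · have key : t.2.1 (r⁻¹ * w.1, r⁻¹ * w.2) = w := by
        rw [hL]
        simp [Prod.ext_iff, ← mul_assoc, mul_inv_cancel₀ hr]
      show t.2.1⁻¹ w = _
      have : (t.2.1⁻¹ : _) w = t.2.1.symm w := rfl
      rw [this, LinearEquiv.symm_apply_eq, key]
    · have key : t.2.2 (r⁻¹ * w.1, r⁻¹ * w.2) = w := by
        rw [hM]
        simp [Prod.ext_iff, ← mul_assoc, mul_inv_cancel₀ hr]
      show t.2.2⁻¹ w = _
      have : (t.2.2⁻¹ : _) w = t.2.2.symm w := rfl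
      rw [this, LinearEquiv.symm_apply_eq, key]

open scoped Pointwise
section Aux

variable (p m : ℕ) [Fact p.Prime]

/-- Multiplication by a pair of units, as a `ZMod p`-linear equivalence. -/
def mulTwo (s t : (GF p m)ˣ) : (GF p m × GF p m) ≃ₗ[ZMod p] GF p m × GF p m where
  toFun w := ((s : GF p m) * w.1, (t : GF p m) * w.2)
  invFun w := ((↑s⁻¹ : GF p m) * w.1, (↑t⁻¹ : GF p m) * w.2)
  map_add' w₁ w₂ := by simp [Prod.ext_iff]; constructor <;> ring
  map_smul' c w := by
    simp [Prod.ext_iff, Prod.smul_fst, Prod.smul_snd, mul_smul_comm]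
  left_inv w := by simp [Prod.ext_iff, ← mul_assoc]
  right_inv w := by simp [Prod.ext_iff, ← mul_assoc]

@[simp] lemma mulTwo_apply (s t : (GF p m)ˣ) (w : GF p m × GF p m) :
    mulTwo p m s t w = ((s : GF p m) * w.1, (t : GF p m) * w.2) := rfl

/-- The map `r ↦ γ_r` as a monoid hom into `G3`. -/
def gammaHom (q : ℕ) : (GF p m)ˣ →* G3 p m where
  toFun r := (mulTwo p m (r ^ (q + 1)) (r ^ (q ^ 2 + 1)), mulTwo p m r r, mulTwo p m r r)
  map_one' := by
    refine Prod.ext ?_ (Prod.ext ?_ ?_) <;>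
      · apply LinearEquiv.ext; intro w
        show _ = w
        simp [Prod.ext_iff]
  map_mul' r s := by
    refine Prod.ext ?_ (Prod.ext ?_ ?_) <;>
      · apply LinearEquiv.ext; intro w
        show _ = (mulTwo p m _ _) ((mulTwo p m _ _) w)
        simp only [mulTwo_apply, Prod.ext_iff, Units.val_mul, Units.val_pow_eq_pow_val, mul_pow]
        constructor <;> ring

lemma gammaHom_injective (q : ℕ) : Function.Injective (gammaHom p m q) := by
  intro r s h
  have h2 := congrArg (fun t : G3 p m => (t.2.1 ((1 : GF p m), (0 : GF p m))).1) h
  simp [gammaHom] at h2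
  exact Units.ext h2

end Aux
section Aux2

variable (p m : ℕ) [Fact p.Prime]

lemma mem_Zgroup_iff {q : ℕ} {t : G3 p m} :
    t ∈ Zgroup p m q ↔ ∃ u : (GF p m)ˣ, t = gammaHom p m q u := by
  constructor
  · rintro ⟨r, hr, hN, hL, hM⟩
    refine ⟨Units.mk0 r hr, ?_⟩
    refine Prod.ext ?_ (Prod.ext ?_ ?_) <;> apply LinearEquiv.ext <;> intro w
    · rw [hN]; show _ = ((_ : GF p m) * w.1, (_ : GF p m) * w.2)
      simp [gammaHom]
    · rw [hL]; show _ = ((_ : GF p m) * w.1, (_ : GF p m) * w.2); simp [gammaHom]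
    · rw [hM]; show _ = ((_ : GF p m) * w.1, (_ : GF p m) * w.2); simp [gammaHom]
  · rintro ⟨u, rfl⟩
    exact ⟨(u : GF p m), u.ne_zero, fun w => by simp [gammaHom], fun w => rfl, fun w => rfl⟩

lemma mem_ZRgroup_iff {q p' : ℕ} (hp'p : p'.Prime) {t : G3 p m} :
    t ∈ ZRgroup p m q p' hp'p ↔
      ∃ u : (GF p m)ˣ, (∃ j, orderOf u = p' ^ j) ∧ t = gammaHom p m q u := by
  constructor
  · rintro ⟨r, hr, ⟨j, hj⟩, hN, hL, hM⟩
    refine ⟨Units.mk0 r hr, ⟨j, ?_⟩, ?_⟩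
    · rw [← hj, ← orderOf_units, Units.val_mk0]
    refine Prod.ext ?_ (Prod.ext ?_ ?_) <;> apply LinearEquiv.ext <;> intro w
    · rw [hN]; show _ = ((_ : GF p m) * w.1, (_ : GF p m) * w.2); simp [gammaHom]
    · rw [hL]; show _ = ((_ : GF p m) * w.1, (_ : GF p m) * w.2); simp [gammaHom]
    · rw [hM]; show _ = ((_ : GF p m) * w.1, (_ : GF p m) * w.2); simp [gammaHom]
  · rintro ⟨u, ⟨j, hj⟩, rfl⟩
    refine ⟨(u : GF p m), u.ne_zero, ⟨j, by rw [orderOf_units, hj]⟩,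
      fun w => by simp [gammaHom], fun w => rfl, fun w => rfl⟩

lemma ZRgroup_le_Zgroup {q p' : ℕ} (hp'p : p'.Prime) :
    ZRgroup p m q p' hp'p ≤ Zgroup p m q := by
  rintro t ⟨r, hr, _, hN, hL, hM⟩
  exact ⟨r, hr, hN, hL, hM⟩

lemma Zgroup_le_autGroup (q : ℕ) (α a b : GF p m) :
    Zgroup p m q ≤ autGroup p m (taniMul p m q α a b) := by
  rintro t ⟨r, hr, hN, hL, hM⟩
  intro w z
  rw [hN, hL, hM]
  show _ = taniMul p m q α a b (r * w.1, r * w.2) (r * z.1, r * z.2)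
  simp only [taniMul, Prod.ext_iff, mul_pow]
  constructor <;> ring

end Aux2
section Aux3

lemma primdiv_cast_iff {p m p' : ℕ} (hp : p.Prime)
    (hp' : IsPrimitiveDivisor p m p') (K : ℕ) :
    p' ∣ p ^ K - 1 ↔ (p : ZMod p') ^ K = 1 := by
  haveI : NeZero p' := ⟨hp'.1.ne_zero⟩
  rw [← ZMod.natCast_eq_zero_iff]
  rw [Nat.cast_sub (Nat.one_le_pow _ _ hp.pos), Nat.cast_pow, Nat.cast_one, sub_eq_zero]

lemma primdiv_orderOf {p m p' : ℕ} (hp : p.Prime) (hm : m ≠ 0)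
    (hp' : IsPrimitiveDivisor p m p') : orderOf (p : ZMod p') = m := by
  have hd : orderOf (p : ZMod p') ∣ m :=
    orderOf_dvd_of_pow_eq_one ((primdiv_cast_iff hp hp' m).mp hp'.2.1)
  have hdne : orderOf (p : ZMod p') ≠ 0 := fun h => hm (by simpa [h] using hd)
  rcases lt_or_eq_of_le (Nat.le_of_dvd (Nat.pos_of_ne_zero hm) hd) with hlt | heq
  · exact absurd ((primdiv_cast_iff hp hp' _).mpr (pow_orderOf_eq_one _))
      (hp'.2.2 _ (Nat.one_le_iff_ne_zero.mpr hdne) hlt)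
  · exact heq

lemma primdiv_dvd_imp {p m p' : ℕ} (hp : p.Prime) (hm : m ≠ 0)
    (hp' : IsPrimitiveDivisor p m p') : ∀ K : ℕ, p' ∣ p ^ K - 1 → m ∣ K := by
  intro K hK
  rw [← primdiv_orderOf hp hm hp']
  exact orderOf_dvd_of_pow_eq_one ((primdiv_cast_iff hp hp' K).mp hK)

lemma primdiv_ne_p {p m p' : ℕ} (hp : p.Prime) (hm : m ≠ 0)
    (hp' : IsPrimitiveDivisor p m p') : p' ≠ p := by
  intro h
  subst h
  have h1 : p' ∣ p' ^ m := dvd_pow_self p' hm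
  have h2 := Nat.dvd_sub h1 hp'.2.1
  rw [Nat.sub_sub_self (Nat.one_le_pow _ _ hp.pos)] at h2
  exact absurd (Nat.le_of_dvd one_pos h2) (by have := hp'.1.two_le; omega)

lemma primdiv_not_dvd_m {p m p' : ℕ} (hp : p.Prime) (hm : m ≠ 0)
    (hp' : IsPrimitiveDivisor p m p') : ¬ p' ∣ m := by
  haveI : Fact p'.Prime := ⟨hp'.1⟩
  have hcop : Nat.Coprime p p' := (Nat.coprime_primes hp hp'.1).mpr
    (fun h => primdiv_ne_p hp hm hp' h.symm)
  have hmd : m ∣ p' - 1 := by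
    have hu : ((ZMod.unitOfCoprime p hcop : (ZMod p')ˣ) : ZMod p') = (p : ZMod p') :=
      ZMod.coe_unitOfCoprime _ _
    have h5 : orderOf (ZMod.unitOfCoprime p hcop) = m := by
      rw [← primdiv_orderOf hp hm hp', ← hu, orderOf_units]
    rw [← h5, ← ZMod.card_units p']
    exact orderOf_dvd_card
  intro hdvd
  have h0 : p' ∣ p' - 1 := hdvd.trans hmd
  have h1 : p' - 1 ≠ 0 := by have := hp'.1.two_le; omega
  have := Nat.le_of_dvd (Nat.pos_of_ne_zero h1) h0
  omega

end Aux3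
section Aux4

variable (p m : ℕ) [Fact p.Prime]

lemma aeval_pow_p (μ : Polynomial (ZMod p)) (x : GF p m) (i : ℕ) :
    Polynomial.aeval (x ^ p ^ i) μ = (Polynomial.aeval x μ) ^ p ^ i := by
  induction i with
  | zero => simp
  | succ i ih =>
    have hstep : ∀ y : GF p m, Polynomial.aeval (y ^ p) μ = (Polynomial.aeval y μ) ^ p := by
      intro y
      have hfr : (frobenius (GF p m) p).comp (algebraMap (ZMod p) (GF p m))
          = algebraMap (ZMod p) (GF p m) := by
        ext c
        simp [frobenius_def, ← map_pow, ZMod.pow_card]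
      have h1 : Polynomial.aeval (y ^ p) μ
          = Polynomial.eval₂ ((frobenius (GF p m) p).comp (algebraMap (ZMod p) (GF p m)))
            (frobenius (GF p m) p y) μ := by
        rw [hfr, frobenius_def, Polynomial.aeval_def]
      rw [h1, ← Polynomial.hom_eval₂]
      rfl
    rw [pow_succ, pow_mul, hstep, ih, ← pow_mul, ← pow_succ]

lemma minpoly_eq_of_intertwine (L : (GF p m × GF p m) ≃ₗ[ZMod p] GF p m × GF p m)
    {r r' : GF p m} (h : ∀ x : GF p m × GF p m, L (r • x) = r' • L x) :
    minpoly (ZMod p) r = minpoly (ZMod p) r' := by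
  have key : ∀ (L : (GF p m × GF p m) ≃ₗ[ZMod p] GF p m × GF p m) (r r' : GF p m),
      (∀ x : GF p m × GF p m, L (r • x) = r' • L x) →
      ∀ P : Polynomial (ZMod p), Polynomial.aeval r P = 0 → Polynomial.aeval r' P = 0 := by
    intro L r r' h P
    have claim1 : ∀ (n : ℕ) (x : GF p m × GF p m), L ((r ^ n) • x) = (r' ^ n) • L x := by
      intro n
      induction n with
      | zero => intro x; simp
      | succ n ih =>
        intro x
        rw [pow_succ', mul_smul, h, ih, ← mul_smul, ← pow_succ']
    have key2 : ∀ (Q : Polynomial (ZMod p)) (x : GF p m × GF p m),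
        L ((Polynomial.aeval r Q) • x) = (Polynomial.aeval r' Q) • L x := by
      intro Q
      induction Q using Polynomial.induction_on' with
      | add f g hf hg =>
        intro x
        simp only [map_add, add_smul, map_add, hf, hg]
      | monomial n c =>
        intro x
        rw [Polynomial.aeval_monomial, Polynomial.aeval_monomial, mul_smul, mul_smul,
          algebraMap_smul, algebraMap_smul, map_smul, claim1]
    intro hP
    have h0 := key2 P (L.symm (1, 0))
    rw [hP, zero_smul, map_zero, L.apply_symm_apply] at h0
    have : (Polynomial.aeval r' P) • ((1 : GF p m), (0 : GF p m))
        = ((Polynomial.aeval r' P : GF p m), (0 : GF p m)) := by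
      simp [Prod.smul_def, smul_eq_mul]
    rw [this] at h0
    exact (Prod.ext_iff.mp h0.symm).1
  have h1 : minpoly (ZMod p) r' ∣ minpoly (ZMod p) r :=
    minpoly.dvd _ _ (key L r r' h _ (minpoly.aeval _ _))
  have hsymm : ∀ x : GF p m × GF p m, L.symm (r' • x) = r • L.symm x := by
    intro x
    apply L.injective
    rw [L.apply_symm_apply, h, L.apply_symm_apply]
  have h2 : minpoly (ZMod p) r ∣ minpoly (ZMod p) r' :=
    minpoly.dvd _ _ (key L.symm r' r hsymm _ (minpoly.aeval _ _))
  have hint : IsIntegral (ZMod p) r := IsIntegral.of_finite _ _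
  have hint' : IsIntegral (ZMod p) r' := IsIntegral.of_finite _ _
  exact Polynomial.eq_of_monic_of_associated (minpoly.monic hint) (minpoly.monic hint')
    (associated_of_dvd_dvd h2 h1)

end Aux4
section Aux5

variable (p m : ℕ) [Fact p.Prime]

lemma conj_of_minpoly_eq {p' : ℕ} (hm : m ≠ 0) (hp' : IsPrimitiveDivisor p m p')
    {r r' : GF p m} {j : ℕ} (hj : j ≠ 0) (hord : orderOf r = p' ^ j)
    (hmin : minpoly (ZMod p) r' = minpoly (ZMod p) r) :
    ∃ i < m, r' = r ^ p ^ i := by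
  have hp : p.Prime := Fact.out
  have hpow1 : r ^ p' ^ j = 1 := by rw [← hord]; exact pow_orderOf_eq_one r
  have hrne : r ≠ 0 := by
    intro h
    rw [h, zero_pow (pow_ne_zero j hp'.1.ne_zero)] at hpow1
    exact zero_ne_one hpow1
  -- p' divides orderOf r
  have hp'dvd : p' ∣ orderOf r := hord ▸ dvd_pow_self p' hj
  -- distinctness of Frobenius conjugates
  have hdist : ∀ i₁ i₂, i₁ < i₂ → i₂ < m → r ^ p ^ i₁ ≠ r ^ p ^ i₂ := by
    intro i₁ i₂ h12 h2m heq
    -- r ^ (p ^ i₁ * (p ^ (i₂ - i₁) - 1)) = 1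
    have hkey : r ^ (p ^ i₁ * (p ^ (i₂ - i₁) - 1)) = 1 := by
      have hy : (r ^ p ^ i₁) ^ (p ^ (i₂ - i₁)) = r ^ p ^ i₁ := by
        rw [← pow_mul, ← pow_add]
        rw [Nat.add_sub_cancel' (le_of_lt h12)]
        exact heq.symm
      have hyne : r ^ p ^ i₁ ≠ 0 := pow_ne_zero _ hrne
      have h1 : (r ^ p ^ i₁) ^ (p ^ (i₂ - i₁) - 1) * (r ^ p ^ i₁) = r ^ p ^ i₁ := by
        rw [← pow_succ, Nat.sub_add_cancel (Nat.one_le_pow _ _ hp.pos), hy]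
      have h2 : (r ^ p ^ i₁) ^ (p ^ (i₂ - i₁) - 1) = 1 := by
        have := mul_right_cancel₀ hyne (h1.trans (one_mul (r ^ p ^ i₁)).symm)
        exact this
      rw [pow_mul]
      exact h2
    have hdvd : orderOf r ∣ p ^ i₁ * (p ^ (i₂ - i₁) - 1) := orderOf_dvd_of_pow_eq_one hkey
    have hcop : Nat.Coprime (orderOf r) (p ^ i₁) := by
      rw [hord]
      exact Nat.Coprime.pow _ _ ((Nat.coprime_primes hp'.1 hp).mpr
        (primdiv_ne_p hp hm hp'))
    have hdvd2 : orderOf r ∣ p ^ (i₂ - i₁) - 1 :=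
      (Nat.Coprime.dvd_of_dvd_mul_left hcop hdvd)
    have hp'd : p' ∣ p ^ (i₂ - i₁) - 1 := hp'dvd.trans hdvd2
    have hmdvd : m ∣ i₂ - i₁ := primdiv_dvd_imp hp hm hp' _ hp'd
    have hne0 : i₂ - i₁ ≠ 0 := by omega
    have := Nat.le_of_dvd (Nat.pos_of_ne_zero hne0) hmdvd
    omega
  -- the minimal polynomial of r, mapped to GF p m
  set μ := minpoly (ZMod p) r with hμ
  have hint : IsIntegral (ZMod p) r := IsIntegral.of_finite _ _
  have hμne : μ ≠ 0 := minpoly.ne_zero hint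
  set μF := μ.map (algebraMap (ZMod p) (GF p m)) with hμF
  have hμFne : μF ≠ 0 := Polynomial.map_ne_zero hμne
  -- conjugates are roots
  have hroot : ∀ i, Polynomial.eval (r ^ p ^ i) μF = 0 := by
    intro i
    rw [hμF, Polynomial.eval_map, ← Polynomial.aeval_def, aeval_pow_p,
      minpoly.aeval, zero_pow (pow_ne_zero _ hp.ne_zero)]
  -- the finset of conjugates
  set conj : Finset (GF p m) := (Finset.range m).image (fun i => r ^ p ^ i) with hconj
  have hcard : conj.card = m := by
    rw [hconj, Finset.card_image_of_injOn, Finset.card_range]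
    intro i₁ h1 i₂ h2 heq
    simp only [Finset.mem_range, Finset.coe_range, Set.mem_Iio] at h1 h2
    by_contra hne
    rcases Nat.lt_or_ge i₁ i₂ with hlt | hge
    · exact hdist i₁ i₂ hlt h2 heq
    · exact hdist i₂ i₁ (by omega) h1 heq.symm
  have hsub : conj ⊆ μF.roots.toFinset := by
    intro x hx
    rw [hconj] at hx
    obtain ⟨i, _, rfl⟩ := Finset.mem_image.mp hx
    rw [Multiset.mem_toFinset, Polynomial.mem_roots hμFne]
    exact (Polynomial.IsRoot.def).mpr (hroot i)
  have hdeg : μ.natDegree ≤ m := by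
    have := minpoly.natDegree_le (A := ZMod p) r
    rwa [GaloisField.finrank p hm] at this
  have hcard2 : μF.roots.toFinset.card ≤ m := by
    calc μF.roots.toFinset.card ≤ Multiset.card μF.roots := Multiset.toFinset_card_le _
      _ ≤ μF.natDegree := Polynomial.card_roots' μF
      _ = μ.natDegree := Polynomial.natDegree_map_eq_of_injective
          (algebraMap (ZMod p) (GF p m)).injective μ
      _ ≤ m := hdeg
  have heqf : conj = μF.roots.toFinset :=
    Finset.eq_of_subset_of_card_le hsub (by rw [hcard]; exact hcard2)
  -- r' is a root
  have hr'root : r' ∈ μF.roots.toFinset := by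
    rw [Multiset.mem_toFinset, Polynomial.mem_roots hμFne]
    rw [Polynomial.IsRoot.def, hμF, Polynomial.eval_map, ← Polynomial.aeval_def, ← hmin]
    exact minpoly.aeval _ _
  rw [← heqf, hconj] at hr'root
  obtain ⟨i, hi, hieq⟩ := Finset.mem_image.mp hr'root
  exact ⟨i, Finset.mem_range.mp hi, hieq.symm⟩

end Aux5
section Aux6

variable (p m : ℕ) [Fact p.Prime]

instance : Finite ((GF p m × GF p m) ≃ₗ[ZMod p] GF p m × GF p m) :=
  Finite.of_injective (fun e => (⇑e : GF p m × GF p m → GF p m × GF p m))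
    (fun _ _ h => by apply LinearEquiv.ext; exact fun x => congrFun h x)

lemma claimA (q p' : ℕ) (hp'p : p'.Prime) (hm : m ≠ 0) (hp' : IsPrimitiveDivisor p m p')
    {g : G3 p m}
    (hnorm : ∀ γ ∈ ZRgroup p m q p' hp'p, g * γ * g⁻¹ ∈ ZRgroup p m q p' hp'p)
    {e : ℕ} (hge : g ^ p' ^ e = 1) :
    ∀ γ ∈ ZRgroup p m q p' hp'p, g * γ = γ * g := by
  have hp : p.Prime := Fact.out
  intro γ hγ
  obtain ⟨u, ⟨j, hj⟩, rfl⟩ := (mem_ZRgroup_iff p m hp'p).mp hγ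
  by_cases hj0 : j = 0
  · have : u = 1 := by
      rw [← orderOf_eq_one_iff, hj, hj0, pow_zero]
    rw [this, map_one, mul_one, one_mul]
  -- main case
  have hconj := hnorm _ hγ
  obtain ⟨u', _, hconjeq⟩ := (mem_ZRgroup_iff p m hp'p).mp hconj
  -- extract the intertwining relation on the second component
  have hL : ∀ x : GF p m × GF p m,
      g.2.1 ((u : GF p m) • x) = (u' : GF p m) • g.2.1 x := by
    intro x
    have h1 := congrArg (fun t : G3 p m => t.2.1 (g.2.1 x)) hconjeq
    have h2 : (g * gammaHom p m q u * g⁻¹).2.1 (g.2.1 x)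
        = g.2.1 ((gammaHom p m q u).2.1 x) := by
      show g.2.1 ((gammaHom p m q u).2.1 ((g.2.1)⁻¹ (g.2.1 x))) = _
      have h3 : (g.2.1)⁻¹ (g.2.1 x) = x := g.2.1.symm_apply_apply x
      rw [h3]
    rw [h2] at h1
    have h4 : (gammaHom p m q u).2.1 x = (u : GF p m) • x := by
      show ((u : GF p m) * x.1, (u : GF p m) * x.2) = _
      ext <;> simp
    have h5 : (gammaHom p m q u').2.1 (g.2.1 x) = (u' : GF p m) • g.2.1 x := by
      show ((u' : GF p m) * (g.2.1 x).1, (u' : GF p m) * (g.2.1 x).2) = _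
      ext <;> simp
    rw [h4] at h1
    rw [h1, h5]
  have hord : orderOf (u : GF p m) = p' ^ j := by rw [orderOf_units, hj]
  have hmin := minpoly_eq_of_intertwine p m g.2.1 hL
  obtain ⟨i, him, hieq⟩ := conj_of_minpoly_eq p m hm hp' hj0 hord hmin.symm
  have hu' : u' = u ^ p ^ i := by
    apply Units.ext
    rw [Units.val_pow_eq_pow_val, ← hieq]
  rw [hu'] at hconjeq
  -- iterate the conjugation
  have hiter : ∀ n : ℕ, g ^ n * gammaHom p m q u * (g ^ n)⁻¹
      = gammaHom p m q (u ^ p ^ (i * n)) := by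
    intro n
    induction n with
    | zero => simp
    | succ n ih =>
      have hsplit : g ^ (n + 1) * gammaHom p m q u * (g ^ (n + 1))⁻¹
          = g * (g ^ n * gammaHom p m q u * (g ^ n)⁻¹) * g⁻¹ := by
        rw [pow_succ']
        group
      have hcp : ∀ (b : G3 p m) (n : ℕ), g * b ^ n * g⁻¹ = (g * b * g⁻¹) ^ n := by
        intro b n
        induction n with
        | zero => simp
        | succ n ihn => rw [pow_succ, pow_succ, ← ihn]; group
      have hexp : i + i * n = i * (n + 1) := by ring
      rw [hsplit, ih, map_pow, hcp, hconjeq, ← map_pow, ← pow_mul, ← pow_add, hexp]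
  have hfin := hiter (p' ^ e)
  rw [hge, one_mul, inv_one, mul_one] at hfin
  have huu : u = u ^ p ^ (i * p' ^ e) := gammaHom_injective p m q hfin
  -- derive p' ∣ p ^ (i * p' ^ e) - 1
  have hupow : u ^ (p ^ (i * p' ^ e) - 1) = 1 := by
    have h1 : u ^ (p ^ (i * p' ^ e) - 1) * u = u := by
      rw [← pow_succ, Nat.sub_add_cancel (Nat.one_le_pow _ _ hp.pos), ← huu]
    exact mul_right_cancel (h1.trans (one_mul u).symm)
  have hdvd1 : orderOf u ∣ p ^ (i * p' ^ e) - 1 := orderOf_dvd_of_pow_eq_one hupow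
  have hp'd : p' ∣ p ^ (i * p' ^ e) - 1 := by
    refine dvd_trans ?_ hdvd1
    rw [hj]
    exact dvd_pow_self p' hj0
  have hmdvd : m ∣ i * p' ^ e := primdiv_dvd_imp hp hm hp' _ hp'd
  have hcop : Nat.Coprime m (p' ^ e) :=
    Nat.Coprime.pow_right e
      (((Nat.Prime.coprime_iff_not_dvd hp'p).mpr (primdiv_not_dvd_m hp hm hp')).symm)
  have hmi : m ∣ i := Nat.Coprime.dvd_of_dvd_mul_right hcop hmdvd
  have hi0 : i = 0 := Nat.eq_zero_of_dvd_of_lt hmi him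
  rw [hi0, pow_zero, pow_one] at hconjeq
  exact mul_inv_eq_iff_eq_mul.mp hconjeq

end Aux6
/-- Lemma 5: if the centralizer of `Z_R^{(q)}` in `Aut(P)` contains `Z^{(q)}` with
index `I` not divisible by `p'`, then `Z_R^{(q)}` is a Sylow `p'`-subgroup of `Aut(P)`. -/
theorem ZR_is_sylow (p m k p' I : ℕ) [Fact p.Prime] (hm : 0 < m)
    (hk1 : 1 ≤ k) (hk2 : k ≤ m - 1) (α a b : GF p m)
    (htani : IsTaniguchiParam p m (p ^ k) α a b)
    (hp' : IsPrimitiveDivisor p m p')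
    (C : Subgroup (G3 p m))
    (hC : C = Subgroup.centralizer (ZRgroup p m (p ^ k) p' hp'.1 : Set (G3 p m)) ⊓
      autGroup p m (taniMul p m (p ^ k) α a b))
    (hZC : Zgroup p m (p ^ k) ≤ C)
    (hI : (Zgroup p m (p ^ k)).relIndex C = I)
    (hpI : ¬ p' ∣ I) :
    ZRgroup p m (p ^ k) p' hp'.1 ≤ autGroup p m (taniMul p m (p ^ k) α a b) ∧
    IsPGroup p' ((ZRgroup p m (p ^ k) p' hp'.1).subgroupOf
        (autGroup p m (taniMul p m (p ^ k) α a b))) ∧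
    ¬ p' ∣ ((ZRgroup p m (p ^ k) p' hp'.1).subgroupOf
        (autGroup p m (taniMul p m (p ^ k) α a b))).index := by
  classical
  have hp : p.Prime := Fact.out
  haveI hfp' : Fact p'.Prime := ⟨hp'.1⟩
  have hmne : m ≠ 0 := hm.ne'
  set A := autGroup p m (taniMul p m (p ^ k) α a b) with hA
  set ZR := ZRgroup p m (p ^ k) p' hp'.1 with hZRdef
  set Z := Zgroup p m (p ^ k) with hZdef
  have hZA : Z ≤ A := Zgroup_le_autGroup p m (p ^ k) α a b
  have hZRZ : ZR ≤ Z := ZRgroup_le_Zgroup p m hp'.1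
  have hZRA : ZR ≤ A := hZRZ.trans hZA
  have hpgroup : IsPGroup p' (ZR.subgroupOf A) := by
    intro x
    obtain ⟨u, ⟨j, hj⟩, hequ⟩ :=
      (mem_ZRgroup_iff p m hp'.1).mp (Subgroup.mem_subgroupOf.mp x.2)
    refine ⟨j, ?_⟩
    have h1 : (((x : ↥A) : G3 p m)) ^ p' ^ j = 1 := by
      rw [hequ, ← map_pow, ← hj, pow_orderOf_eq_one, map_one]
    apply Subtype.ext
    apply Subtype.ext
    push_cast
    exact h1
  have hZRZidx : ¬ p' ∣ ZR.relIndex Z := by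
    obtain ⟨P⟩ : Nonempty (Sylow p' ↥Z) := inferInstance
    have hPle : (P : Subgroup ↥Z) ≤ ZR.subgroupOf Z := by
      intro x hxP
      obtain ⟨n, hn⟩ := P.isPGroup' ⟨x, hxP⟩
      rw [Subgroup.mem_subgroupOf]
      obtain ⟨u, hxu⟩ := (mem_Zgroup_iff p m).mp x.2
      rw [mem_ZRgroup_iff p m hp'.1]
      refine ⟨u, ?_, hxu⟩
      have h1 : ((x : G3 p m)) ^ p' ^ n = 1 := by
        have h2 := congrArg (fun y : ↥(P : Subgroup ↥Z) => ((y : ↥Z) : G3 p m)) hn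
        push_cast at h2
        exact h2
      have h2 : u ^ p' ^ n = 1 :=
        gammaHom_injective p m _ (by rw [map_pow, ← hxu, h1, map_one])
      obtain ⟨j, _, hj⟩ := (Nat.dvd_prime_pow hp'.1).mp (orderOf_dvd_of_pow_eq_one h2)
      exact ⟨j, hj⟩
    intro hdvd
    exact P.not_dvd_index' Subgroup.index_ne_zero_of_finite
      (hdvd.trans (Subgroup.index_dvd_of_le hPle))
  have hZRCle : ZR ≤ C := hZRZ.trans hZC
  have hZRC : ¬ p' ∣ ZR.relIndex C := by
    rw [← Subgroup.relIndex_mul_relIndex ZR Z C hZRZ hZC, hI]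
    intro h
    rcases (Nat.Prime.dvd_mul hp'.1).mp h with h1 | h1
    · exact hZRZidx h1
    · exact hpI h1
  have hCcent : ∀ c ∈ C, ∀ γ ∈ ZR, c * γ = γ * c := by
    intro c hc γ hγ
    rw [hC] at hc
    exact (Subgroup.mem_centralizer_iff.mp hc.1 γ hγ).symm
  haveI hHnormal : (ZR.subgroupOf C).Normal := by
    constructor
    intro n hn g
    rw [Subgroup.mem_subgroupOf] at hn ⊢
    have hcomm := hCcent (g : G3 p m) g.2 (n : G3 p m) hn
    have heq : (((g * n * g⁻¹ : ↥C) : G3 p m)) = (n : G3 p m) := by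
      push_cast
      rw [hcomm]
      group
    rw [heq]
    exact hn
  have hkey : ∀ x : ↥C, (∃ n : ℕ, x ^ p' ^ n = 1) → x ∈ ZR.subgroupOf C := by
    rintro x ⟨n, hxn⟩
    set H := ZR.subgroupOf C with hH
    set K := H ⊔ Subgroup.zpowers x with hKdef
    have hKp : IsPGroup p' ↥K := by
      intro y
      have hset : ((K : Set ↥C)) = (H : Set ↥C) * (Subgroup.zpowers x : Set ↥C) :=
        Subgroup.normal_mul H (Subgroup.zpowers x)
      have hy2 : (y : ↥C) ∈ (H : Set ↥C) * (Subgroup.zpowers x : Set ↥C) := by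
        rw [← hset]; exact y.2
      obtain ⟨h, hh, z, hz, hmul⟩ := hy2
      obtain ⟨u, ⟨j, hj⟩, hequ⟩ := (mem_ZRgroup_iff p m hp'.1).mp
        (Subgroup.mem_subgroupOf.mp hh)
      have hhord : h ^ p' ^ j = 1 := by
        apply Subtype.ext
        push_cast
        rw [hequ, ← map_pow, ← hj, pow_orderOf_eq_one, map_one]
      obtain ⟨t, ht⟩ := Subgroup.mem_zpowers_iff.mp hz
      have hzord : z ^ p' ^ n = 1 := by
        rw [← ht, ← zpow_natCast, ← zpow_mul, mul_comm, zpow_mul, zpow_natCast, hxn,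
          one_zpow]
      have hcm : Commute h z := by
        show h * z = z * h
        apply Subtype.ext
        push_cast
        exact (hCcent (z : G3 p m) z.2 (h : G3 p m) (Subgroup.mem_subgroupOf.mp hh)).symm
      have e1 : h ^ p' ^ (j + n) = 1 := by
        rw [pow_add, pow_mul, hhord, one_pow]
      have e2 : z ^ p' ^ (j + n) = 1 := by
        rw [pow_add, mul_comm (p' ^ j), pow_mul, hzord, one_pow]
      have hpow : (h * z) ^ p' ^ (j + n) = 1 := by
        rw [hcm.mul_pow, e1, e2, one_mul]
      refine ⟨j + n, ?_⟩
      apply Subtype.ext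
      push_cast
      rw [← hmul, hpow]
    have hle : H ≤ K := le_sup_left
    have h1 : H.relIndex K * K.index = H.index := Subgroup.relIndex_mul_index hle
    have hHidx : ¬ p' ∣ H.index := hZRC
    have h2 : ¬ p' ∣ H.relIndex K := by
      intro hdvd
      exact hHidx (h1 ▸ hdvd.mul_right K.index)
    obtain ⟨nn, hcard⟩ := hKp.exists_card_eq
    have h3 : (H.subgroupOf K).index ∣ p' ^ nn := hcard ▸ Subgroup.index_dvd_card (H.subgroupOf K)
    obtain ⟨d, hdle, hd⟩ := (Nat.dvd_prime_pow hp'.1).mp h3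
    have hd0 : d = 0 := by
      by_contra hd0
      refine h2 ?_
      rw [show H.relIndex K = (H.subgroupOf K).index from rfl, hd]
      exact dvd_pow_self p' hd0
    have hrel1 : H.relIndex K = 1 := by
      show (H.subgroupOf K).index = 1
      rw [hd, hd0, pow_zero]
    have hKH : K ≤ H := Subgroup.relIndex_eq_one.mp hrel1
    exact hKH ((le_sup_right : Subgroup.zpowers x ≤ K) (Subgroup.mem_zpowers x))
  obtain ⟨S, hSle⟩ := hpgroup.exists_le_sylow
  have hSZR : (S : Subgroup ↥A) ≤ ZR.subgroupOf A := by
    by_contra hnle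
    have hTne : (ZR.subgroupOf A).subgroupOf S ≠ ⊤ :=
      fun h => hnle (Subgroup.subgroupOf_eq_top.mp h)
    haveI : Group.IsNilpotent ↥(S : Subgroup ↥A) := S.isPGroup'.isNilpotent
    have hnc := normalizerCondition_of_isNilpotent (G := ↥(S : Subgroup ↥A))
    have hlt := hnc _ (lt_top_iff_ne_top.mpr hTne)
    obtain ⟨g, hgN, hgT⟩ := SetLike.exists_of_lt hlt
    set g₀ : G3 p m := ((g : ↥A) : G3 p m) with hg₀
    have hg₀A : g₀ ∈ A := (g : ↥A).2
    obtain ⟨e, hge'⟩ := S.isPGroup' g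
    have hge : g₀ ^ p' ^ e = 1 := by
      have h7 := congrArg (fun y : ↥(S : Subgroup ↥A) => ((y : ↥A) : G3 p m)) hge'
      push_cast at h7
      exact h7
    have hnorm : ∀ γ ∈ ZRgroup p m (p ^ k) p' hp'.1,
        g₀ * γ * g₀⁻¹ ∈ ZRgroup p m (p ^ k) p' hp'.1 := by
      intro γ hγ
      have hγA : γ ∈ A := hZRA hγ
      have hγS : (⟨γ, hγA⟩ : ↥A) ∈ (S : Subgroup ↥A) :=
        hSle (Subgroup.mem_subgroupOf.mpr hγ)
      have hmemT : (⟨⟨γ, hγA⟩, hγS⟩ : ↥(S : Subgroup ↥A))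
          ∈ (ZR.subgroupOf A).subgroupOf S :=
        Subgroup.mem_subgroupOf.mpr (Subgroup.mem_subgroupOf.mpr hγ)
      have h5 := (Subgroup.mem_normalizer_iff.mp hgN _).mp hmemT
      rw [Subgroup.mem_subgroupOf, Subgroup.mem_subgroupOf] at h5
      have hcoe : ((((g * ⟨⟨γ, hγA⟩, hγS⟩ * g⁻¹ : ↥(S : Subgroup ↥A)) : ↥A)) : G3 p m)
          = g₀ * γ * g₀⁻¹ := by
        push_cast
        rfl
      rwa [hcoe] at h5
    have hcent := claimA p m (p ^ k) p' hp'.1 hmne hp' hnorm hge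
    have hg₀C : g₀ ∈ C := by
      rw [hC]
      exact ⟨Subgroup.mem_centralizer_iff.mpr (fun γ hγ => (hcent γ hγ).symm), hg₀A⟩
    have hg₀ZR : g₀ ∈ ZR := by
      have h6 := hkey ⟨g₀, hg₀C⟩ ⟨e, by apply Subtype.ext; push_cast; exact hge⟩
      exact Subgroup.mem_subgroupOf.mp h6
    apply hgT
    exact Subgroup.mem_subgroupOf.mpr (Subgroup.mem_subgroupOf.mpr hg₀ZR)
  refine ⟨hZRA, hpgroup, ?_⟩
  have hSeq : ZR.subgroupOf A = (S : Subgroup ↥A) := le_antisymm hSle hSZR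
  rw [hSeq]
  exact S.not_dvd_index' Subgroup.index_ne_zero_of_finite
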